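/- Let μ > −1 be real and ω > 0. Suppose f is holomorphic on an open set containing {z ∈ ℂ : Re z ≥ 0} \ {0}, there exist K > 0 and σ ∈ ℝ with |f(z)| ≤ K|z|^σ for all z in that set with |z| ≥ 1, and there exists M > 0 with |f(z)| ≤ M for all z in that set with 0 < |z| ≤ 1. Then the Abel limit of ∫₀^∞ f(x) x^μ e^{iωx} dx exists and equals e^{i(μ+1)π/2} ∫₀^∞ f(ix) x^μ e^{−ωx} dx, the latter integral being absolutely convergent. -/

import Mathlib

open MeasureTheory Filter Set Polynomial
open scoped Classical

noncomputable section

/-- The Abel limit of `∫₀^∞ g(x) dx` is `L`: for every `s > 0` the integral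
`∫₀^∞ e^{-s x} g(x) dx` converges and these integrals tend to `L` as `s → 0⁺`. -/
def HasAbelLimit (g : ℝ → ℂ) (L : ℂ) : Prop :=
  (∀ s : ℝ, 0 < s →
    IntegrableOn (fun x : ℝ => Complex.exp (-(s : ℂ) * (x : ℂ)) * g x) (Set.Ioi 0)) ∧
  Tendsto (fun s : ℝ => ∫ x in Set.Ioi (0:ℝ), Complex.exp (-(s : ℂ) * (x : ℂ)) * g x)
    (nhdsWithin 0 (Set.Ioi 0)) (nhds L)

/-- Bessel function of the first kind of order `ν`, for `x > 0`, with the convention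
`1/Γ(z) = 0` at nonpositive integers `z` (automatic since `Real.Gamma` vanishes there). -/
def besselJ (ν x : ℝ) : ℝ :=
  ∑' k : ℕ, ((-1 : ℝ) ^ k / ((k.factorial : ℝ) * Real.Gamma (ν + k + 1))) *
    (x / 2) ^ (ν + 2 * (k : ℝ))

/-- Modified Bessel function of the second kind of order `ν`, for `x > 0`. -/
def besselK (ν x : ℝ) : ℝ :=
  ∫ t in Set.Ioi (0:ℝ), Real.exp (-x * Real.cosh t) * Real.cosh (ν * t)

/-- The weight function `w_{μ,ν}` on `(0,∞)`. -/
def weightW (μ ν : ℝ) (x : ℝ) : ℝ :=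
  if ∃ m : ℤ, μ - ν = 2 * m then (1/2) * x ^ ((μ - 1)/2) * besselK ν (Real.sqrt x)
  else (1/2) * x ^ (μ/2) * besselK ν (Real.sqrt x)

/-- `0 < x_1 < ⋯ < x_n` together with positive weights `w_1, …, w_n` form an `n`-point
Gaussian quadrature rule for `w_{μ,ν}`. -/
def IsGaussRule (μ ν : ℝ) (n : ℕ) (xs ws : Fin n → ℝ) : Prop :=
  StrictMono xs ∧ (∀ j, 0 < xs j) ∧ (∀ j, 0 < ws j) ∧
  ∀ p : Polynomial ℝ, p.natDegree ≤ 2 * n - 1 →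
    ∑ j, ws j * p.eval (xs j) = ∫ x in Set.Ioi (0:ℝ), weightW μ ν x * p.eval x

/-- `κ = μ` if `μ - ν` is even and `κ = μ + 1` if `μ - ν` is odd. -/
def kappaQ (μ ν : ℕ) : ℝ := if Even (μ - ν) then (μ : ℝ) else (μ : ℝ) + 1

/-- The boundary weights `ŵ_k⁰` of the generalized Gauss–Radau rule. -/
def wHat0 (μ ν : ℕ) {n : ℕ} (xs ws : Fin n → ℝ) (k : ℕ) : ℝ :=
  (1 / (k.factorial : ℝ)) *
    (2 ^ k * Real.Gamma (((ν : ℝ) + k + 1)/2) / Real.Gamma (((ν : ℝ) - k + 1)/2)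
      - (2 / Real.pi) * Real.cos (((k : ℝ) - ν) * Real.pi / 2) *
          ∑ j, ws j * (xs j) ^ (((k : ℝ) - kappaQ μ ν)/2))

/-- The generalized Gauss–Radau rule `(Q_{2n,μ} f)(ω)`. -/
def QRule (μ ν : ℕ) {n : ℕ} (xs ws : Fin n → ℝ) (f : ℂ → ℂ) (ω : ℝ) : ℂ :=
  (1 / (ω : ℂ)) *
    ((∑ k ∈ Finset.range μ, (wHat0 μ ν xs ws k : ℂ) / (ω : ℂ) ^ k * iteratedDeriv k f 0)
      + ∑ j, ((ws j * (xs j) ^ (-(kappaQ μ ν)/2) / Real.pi : ℝ) : ℂ) *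
          (Complex.exp (-(ν : ℂ) * (Real.pi : ℂ) * Complex.I / 2) *
              f (Complex.I * (Real.sqrt (xs j) : ℂ) / (ω : ℂ))
            + Complex.exp ((ν : ℂ) * (Real.pi : ℂ) * Complex.I / 2) *
              f (-Complex.I * (Real.sqrt (xs j) : ℂ) / (ω : ℂ))))

/-- `P` is a monic polynomial of degree `m` orthogonal with respect to `x^μ J_ν(x)`
on `(0,∞)`, all integrals taken in the Abel-limit sense. -/
def MonicOrthoBessel (μ ν : ℝ) (m : ℕ) (P : Polynomial ℂ) : Prop :=
  P.Monic ∧ P.natDegree = m ∧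
  ∀ k < m, HasAbelLimit
    (fun x : ℝ => P.eval (x : ℂ) * ((x ^ ((k : ℝ) + μ) : ℝ) : ℂ) * (besselJ ν x : ℂ)) 0

/-- `φ` is the monic real polynomial of degree `m` orthogonal to all lower powers
with respect to the weight `w_{μ,ν}` on `(0,∞)`. -/
def IsMonicOrthoW (μ ν : ℝ) (m : ℕ) (φ : Polynomial ℝ) : Prop :=
  φ.Monic ∧ φ.natDegree = m ∧
  ∀ k < m, ∫ x in Set.Ioi (0:ℝ), weightW μ ν x * φ.eval x * x ^ k = 0


open scoped Interval Topology

section AuxRotation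
open Complex in

lemma exp_mul_integrableOn_Iic {a : ℝ} (ha : 0 < a) :
    IntegrableOn (fun u : ℝ => Real.exp (a * u)) (Set.Iic (0:ℝ)) := by
  have h := (Measure.measurePreserving_neg (volume : Measure ℝ)).integrableOn_comp_preimage
    (MeasurableEquiv.neg ℝ).measurableEmbedding (f := fun x : ℝ => Real.exp (-a * x))
    (s := Set.Ioi (0:ℝ))
  have h0 : IntegrableOn (fun x : ℝ => Real.exp (-a * x)) (Set.Ioi (0:ℝ)) :=
    exp_neg_integrableOn_Ioi 0 ha
  rw [← h] at h0
  have he : (Neg.neg ⁻¹' Set.Ioi (0:ℝ)) = Set.Iio 0 := by ext x; simp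
  rw [he] at h0
  rw [integrableOn_Iic_iff_integrableOn_Iio]
  refine h0.congr_fun (fun x _ => ?_) measurableSet_Iio
  simp [MeasurableEquiv.neg]

/-- Master integrability lemma. -/
lemma integrable_of_exp_bounds {g : ℝ → ℂ} (hg : AEStronglyMeasurable g volume)
    {a b m C₁ C₂ : ℝ} (ha : 0 < a) (hm : 0 < m)
    (h₁ : ∀ u : ℝ, u ≤ 0 → ‖g u‖ ≤ C₁ * Real.exp (a * u))
    (h₂ : ∀ u : ℝ, 0 < u → ‖g u‖ ≤ C₂ * Real.exp (b * u) * Real.exp (-m * Real.exp u)) :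
    Integrable g := by
  rw [← integrableOn_univ, ← Set.Iic_union_Ioi (a := (0:ℝ))]
  apply IntegrableOn.union
  · refine Integrable.mono ((exp_mul_integrableOn_Iic ha).const_mul C₁) hg.restrict ?_
    filter_upwards [ae_restrict_mem measurableSet_Iic] with u hu
    calc ‖g u‖ ≤ C₁ * Real.exp (a * u) := h₁ u hu
    _ ≤ ‖C₁ * Real.exp (a * u)‖ := le_abs_self _
  · set n : ℕ := ⌈b⌉₊ + 1 with hn
    have hbn : b - n ≤ -1 := by
      have := Nat.le_ceil b
      push_cast [hn]
      linarith
    have key : ∀ u : ℝ, 0 ≤ u → C₂ * Real.exp (b * u) * Real.exp (-m * Real.exp u)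
        ≤ |C₂| * ((n.factorial : ℝ) / m ^ n) * Real.exp (-1 * u) := by
      intro u hu
      have hexp : Real.exp (-m * Real.exp u) ≤ (n.factorial : ℝ) / (m * Real.exp u) ^ n := by
        have h3 := Real.pow_div_factorial_le_exp (x := m * Real.exp u) (by positivity) n
        rw [div_le_iff₀ (by positivity : (0:ℝ) < (n.factorial:ℝ))] at h3
        rw [neg_mul, Real.exp_neg, le_div_iff₀ (by positivity)]
        calc (Real.exp (m * Real.exp u))⁻¹ * (m * Real.exp u) ^ n
            ≤ (Real.exp (m * Real.exp u))⁻¹ * (Real.exp (m * Real.exp u) * n.factorial) := by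
              gcongr
          _ = n.factorial := by field_simp
      have hpow : (m * Real.exp u) ^ n = m ^ n * Real.exp (n * u) := by
        rw [mul_pow, ← Real.exp_nat_mul]
      calc C₂ * Real.exp (b * u) * Real.exp (-m * Real.exp u)
          ≤ |C₂| * Real.exp (b * u) * ((n.factorial : ℝ) / (m * Real.exp u) ^ n) :=
            mul_le_mul (mul_le_mul (le_abs_self _) le_rfl (Real.exp_pos _).le (abs_nonneg _))
              hexp (Real.exp_pos _).le (by positivity)
        _ = |C₂| * ((n.factorial : ℝ) / m ^ n) * Real.exp (b * u - n * u) := by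
            rw [hpow, Real.exp_sub]; field_simp
        _ ≤ |C₂| * ((n.factorial : ℝ) / m ^ n) * Real.exp (-1 * u) :=
            mul_le_mul_of_nonneg_left (Real.exp_le_exp.mpr (by nlinarith)) (by positivity)
    refine Integrable.mono (((exp_neg_integrableOn_Ioi 0 one_pos).const_mul
      (|C₂| * ((n.factorial : ℝ) / m ^ n)))) hg.restrict ?_
    filter_upwards [ae_restrict_mem measurableSet_Ioi] with u hu
    calc ‖g u‖ ≤ C₂ * Real.exp (b * u) * Real.exp (-m * Real.exp u) := h₂ u hu
      _ ≤ |C₂| * ((n.factorial : ℝ) / m ^ n) * Real.exp (-1 * u) := key u (le_of_lt hu)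
      _ ≤ ‖|C₂| * ((n.factorial : ℝ) / m ^ n) * Real.exp (-1 * u)‖ := le_abs_self _

lemma integral_substExp (g : ℝ → ℂ) :
    (∫ x in Set.Ioi (0:ℝ), g x) = ∫ u : ℝ, Real.exp u • g (Real.exp u) := by
  have h1 : ∀ x ∈ (univ : Set ℝ), HasDerivWithinAt Real.exp (Real.exp x) univ x :=
    fun x _ => (Real.hasDerivAt_exp x).hasDerivWithinAt
  have h2 : InjOn Real.exp univ := Real.exp_injective.injOn
  have := integral_image_eq_integral_abs_deriv_smul MeasurableSet.univ h1 h2 g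
  rw [image_univ, Real.range_exp] at this
  rw [this]
  simp [Real.exp_pos, abs_of_pos, Measure.restrict_univ]

lemma integrableOn_substExp (g : ℝ → ℂ) :
    IntegrableOn g (Set.Ioi (0:ℝ)) ↔ Integrable (fun u : ℝ => Real.exp u • g (Real.exp u)) := by
  have h1 : ∀ x ∈ (univ : Set ℝ), HasDerivWithinAt Real.exp (Real.exp x) univ x :=
    fun x _ => (Real.hasDerivAt_exp x).hasDerivWithinAt
  have h2 : InjOn Real.exp univ := Real.exp_injective.injOn
  have := integrableOn_image_iff_integrableOn_abs_deriv_smul MeasurableSet.univ h1 h2 g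
  rw [image_univ, Real.range_exp] at this
  rw [this, integrableOn_univ]
  refine integrable_congr (Eventually.of_forall fun u => ?_)
  simp [abs_of_pos (Real.exp_pos u)]

lemma tendsto_exponent_atBot {a m : ℝ} (hm : 0 < m) :
    Tendsto (fun T : ℝ => a * T - m * Real.exp T) atTop atBot := by
  have h1 : Tendsto (fun T : ℝ => Real.exp T / T) atTop atTop := by
    simpa using Real.tendsto_exp_div_pow_atTop 1
  have h2 : Tendsto (fun T : ℝ => a - m * (Real.exp T / T)) atTop atBot := by
    apply tendsto_atBot_add_const_left
    exact (h1.const_mul_atTop hm).const_mul_atTop_of_neg (neg_neg_iff_pos.mpr one_pos) |>.congr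
      (fun T => by ring)
  have h3 : Tendsto (fun T : ℝ => T * (a - m * (Real.exp T / T))) atTop atBot :=
    Tendsto.atTop_mul_atBot₀ tendsto_id h2
  refine h3.congr' ?_
  filter_upwards [eventually_gt_atTop 0] with T hT
  field_simp

end AuxRotation

/-- rotation of the integration path for the Fourier-type transform. -/
theorem abel_limit_fourier_rotation (μ ω : ℝ) (hμ : -1 < μ) (hω : 0 < ω) (f : ℂ → ℂ)
    (U : Set ℂ) (hUopen : IsOpen U) (hUsub : {z : ℂ | 0 ≤ z.re} \ {0} ⊆ U)
    (hf : DifferentiableOn ℂ f U)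
    (hgrow : ∃ K : ℝ, 0 < K ∧ ∃ σ : ℝ, ∀ z ∈ ({z : ℂ | 0 ≤ z.re} \ {0} : Set ℂ),
      1 ≤ ‖z‖ → ‖f z‖ ≤ K * ‖z‖ ^ σ)
    (hbdd : ∃ M : ℝ, 0 < M ∧ ∀ z ∈ ({z : ℂ | 0 ≤ z.re} \ {0} : Set ℂ),
      ‖z‖ ≤ 1 → ‖f z‖ ≤ M) :
    IntegrableOn (fun x : ℝ =>
        f (Complex.I * (x : ℂ)) * ((x ^ μ : ℝ) : ℂ) * ((Real.exp (-ω * x) : ℝ) : ℂ))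
      (Set.Ioi 0) ∧
    HasAbelLimit
      (fun x : ℝ => f (x : ℂ) * ((x ^ μ : ℝ) : ℂ) * Complex.exp (Complex.I * (ω : ℂ) * (x : ℂ)))
      (Complex.exp (Complex.I * ((μ : ℂ) + 1) * (Real.pi : ℂ) / 2) *
        ∫ x in Set.Ioi (0:ℝ),
          f (Complex.I * (x : ℂ)) * ((x ^ μ : ℝ) : ℂ) * ((Real.exp (-ω * x) : ℝ) : ℂ)) := by
  obtain ⟨K, hK, σ, hKσ⟩ := hgrow
  obtain ⟨M, hM, hMb⟩ := hbdd
  set Q : Set ℂ := {z : ℂ | 0 ≤ z.re} \ {0} with hQdef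
  have hfc : ContinuousOn f U := hf.continuousOn
  have hπ : (0:ℝ) < Real.pi/2 := by positivity
  -- membership of exp(u+vI) in Q
  have hQ : ∀ u v : ℝ, 0 ≤ v → v ≤ Real.pi/2 → Complex.exp (↑u + ↑v * Complex.I) ∈ Q := by
    intro u v hv1 hv2
    have hcos : 0 ≤ Real.cos v :=
      Real.cos_nonneg_of_mem_Icc ⟨by linarith [Real.pi_pos], hv2⟩
    constructor
    · show 0 ≤ (Complex.exp (↑u + ↑v * Complex.I)).re
      rw [Complex.exp_re]
      have h1 : (↑u + ↑v * Complex.I : ℂ).im = v := by simp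
      have h2 : (↑u + ↑v * Complex.I : ℂ).re = u := by simp
      rw [h1, h2]
      exact mul_nonneg (Real.exp_pos _).le hcos
    · exact fun hmem => Complex.exp_ne_zero _ hmem
  -- the rotated family
  set h : ℝ → ℂ → ℂ := fun s w => f (Complex.exp w) *
    Complex.exp (((μ:ℂ)+1) * w + (Complex.I * (ω:ℂ) - (s:ℂ)) * Complex.exp w) with hh
  -- norm formula
  have hnorm : ∀ s u v : ℝ, ‖h s (↑u + ↑v * Complex.I)‖
      = ‖f (Complex.exp (↑u + ↑v * Complex.I))‖ *
        Real.exp ((μ+1)*u - Real.exp u * (s * Real.cos v + ω * Real.sin v)) := by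
    intro s u v
    have hre : ((((μ:ℂ)+1) * (↑u + ↑v*Complex.I) +
        (Complex.I * (ω:ℂ) - (s:ℂ)) * Complex.exp (↑u + ↑v*Complex.I))).re
        = (μ+1)*u - Real.exp u * (s * Real.cos v + ω * Real.sin v) := by
      have h1 : (↑u + ↑v * Complex.I : ℂ).im = v := by simp
      have h2 : (↑u + ↑v * Complex.I : ℂ).re = u := by simp
      simp only [Complex.add_re, Complex.mul_re, Complex.sub_re, Complex.sub_im,
        Complex.I_re, Complex.I_im, Complex.mul_im, Complex.ofReal_re, Complex.ofReal_im,
        Complex.exp_re, Complex.exp_im, Complex.add_im, Complex.one_re, Complex.one_im,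
        h1, h2]
      ring
    rw [hh]
    simp only
    rw [norm_mul, Complex.norm_exp, hre]
  -- f bound along the strip
  have hfb : ∀ u v : ℝ, 0 ≤ v → v ≤ Real.pi/2 →
      ‖f (Complex.exp (↑u + ↑v*Complex.I))‖ ≤ if u ≤ 0 then M else K * Real.exp (σ * u) := by
    intro u v hv1 hv2
    have habs : ‖Complex.exp (↑u + ↑v*Complex.I)‖ = Real.exp u := by
      rw [Complex.norm_exp]; norm_num
    by_cases hu : u ≤ 0
    · simp only [if_pos hu]
      exact hMb _ (hQ u v hv1 hv2) (by rw [habs]; exact Real.exp_le_one_iff.mpr hu)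
    · push_neg at hu
      simp only [if_neg (not_le.mpr hu)]
      have := hKσ _ (hQ u v hv1 hv2) (by rw [habs]; exact Real.one_le_exp hu.le)
      rwa [habs, ← Real.exp_mul, mul_comm u σ] at this
  -- continuity of h along horizontal lines
  have hcont : ∀ s v : ℝ, 0 ≤ v → v ≤ Real.pi/2 →
      Continuous (fun u : ℝ => h s (↑u + ↑v * Complex.I)) := by
    intro s v hv1 hv2
    have hmap : Continuous (fun u : ℝ => Complex.exp (↑u + ↑v * Complex.I)) := by fun_prop
    have h1 : Continuous (fun u : ℝ => f (Complex.exp (↑u + ↑v * Complex.I))) :=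
      hfc.comp_continuous hmap (fun u => hUsub (hQ u v hv1 hv2))
    rw [hh]
    simp only
    exact h1.mul (by fun_prop)
  -- sin v + cos v ≥ 1 on the quarter
  have hsc : ∀ v : ℝ, 0 ≤ v → v ≤ Real.pi/2 → 1 ≤ Real.cos v + Real.sin v := by
    intro v hv1 hv2
    have h1 : 0 ≤ Real.cos v := Real.cos_nonneg_of_mem_Icc ⟨by linarith [Real.pi_pos], hv2⟩
    have h2 : 0 ≤ Real.sin v := Real.sin_nonneg_of_nonneg_of_le_pi hv1 (by linarith [Real.pi_pos])
    nlinarith [Real.sin_sq_add_cos_sq v]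
  -- integrability along a horizontal line
  have hline_int : ∀ s v : ℝ, 0 ≤ v → v ≤ Real.pi/2 → 0 < s * Real.cos v + ω * Real.sin v →
      Integrable (fun u : ℝ => h s (↑u + ↑v * Complex.I)) := by
    intro s v hv1 hv2 hm
    refine integrable_of_exp_bounds ((hcont s v hv1 hv2).aestronglyMeasurable)
      (a := μ+1) (b := σ+μ+1) (m := s * Real.cos v + ω * Real.sin v)
      (C₁ := M) (C₂ := K) (by linarith) hm ?_ ?_
    · intro u hu
      rw [hnorm]
      have h1 := hfb u v hv1 hv2
      rw [if_pos hu] at h1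
      have h2 : Real.exp ((μ+1)*u - Real.exp u * (s * Real.cos v + ω * Real.sin v))
          ≤ Real.exp ((μ+1)*u) := by
        apply Real.exp_le_exp.mpr
        nlinarith [Real.exp_pos u]
      exact mul_le_mul h1 h2 (Real.exp_pos _).le hM.le
    · intro u hu
      rw [hnorm]
      have h1 := hfb u v hv1 hv2
      rw [if_neg (not_le.mpr hu)] at h1

      have h2 : Real.exp ((μ+1)*u - Real.exp u * (s * Real.cos v + ω * Real.sin v))
          = Real.exp ((μ+1)*u) *
            Real.exp (-(s * Real.cos v + ω * Real.sin v) * Real.exp u) := by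
        rw [← Real.exp_add]; ring_nf
      calc ‖f (Complex.exp (↑u + ↑v*Complex.I))‖ *
            Real.exp ((μ+1)*u - Real.exp u * (s * Real.cos v + ω * Real.sin v))
          ≤ (K * Real.exp (σ * u)) * (Real.exp ((μ+1)*u) *
              Real.exp (-(s * Real.cos v + ω * Real.sin v) * Real.exp u)) := by
            rw [← h2]
            exact mul_le_mul h1 le_rfl (Real.exp_pos _).le (by positivity)
        _ = K * Real.exp ((σ+μ+1)*u) *
              Real.exp (-(s * Real.cos v + ω * Real.sin v) * Real.exp u) := by
            rw [show (σ+μ+1)*u = σ*u + (μ+1)*u by ring, Real.exp_add]; ring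
  have hbot_int : ∀ s : ℝ, 0 < s → Integrable (fun u : ℝ => h s (↑u + ↑(0:ℝ) * Complex.I)) := by
    intro s hs
    exact hline_int s 0 le_rfl hπ.le (by simpa using hs)
  have htop_int : ∀ s : ℝ,
      Integrable (fun u : ℝ => h s (↑u + ↑(Real.pi/2) * Complex.I)) := by
    intro s
    refine hline_int s (Real.pi/2) hπ.le le_rfl ?_
    rw [Real.cos_pi_div_two, Real.sin_pi_div_two]
    simpa using hω
  -- differentiability on the strip
  have hdiff : ∀ s : ℝ, DifferentiableOn ℂ (h s)
      {w : ℂ | 0 ≤ w.im ∧ w.im ≤ Real.pi/2} := by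
    intro s
    have hmapsto : ∀ w ∈ {w : ℂ | 0 ≤ w.im ∧ w.im ≤ Real.pi/2}, Complex.exp w ∈ U := by
      intro w hw
      have hrw : Complex.exp w = Complex.exp (↑w.re + ↑w.im * Complex.I) := by
        rw [Complex.re_add_im]
      rw [hrw]
      exact hUsub (hQ _ _ hw.1 hw.2)
    have h1 : DifferentiableOn ℂ (fun w => f (Complex.exp w))
        {w : ℂ | 0 ≤ w.im ∧ w.im ≤ Real.pi/2} :=
      hf.comp (Complex.differentiable_exp.differentiableOn) hmapsto
    exact h1.mul (Differentiable.differentiableOn (by fun_prop))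
  -- rectangle contour
  have hrect : ∀ s T : ℝ,
      (∫ x : ℝ in (-T)..T, h s (↑x + ↑(0:ℝ) * Complex.I)) -
      (∫ x : ℝ in (-T)..T, h s (↑x + ↑(Real.pi/2) * Complex.I)) +
      Complex.I • (∫ y : ℝ in (0:ℝ)..(Real.pi/2), h s (↑T + ↑y * Complex.I)) -
      Complex.I • (∫ y : ℝ in (0:ℝ)..(Real.pi/2), h s (↑(-T) + ↑y * Complex.I)) = 0 := by
    intro s T
    have hsub : ([[(-T : ℝ), T]] ×ℂ [[(0:ℝ), Real.pi/2]]) ⊆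
        {w : ℂ | 0 ≤ w.im ∧ w.im ≤ Real.pi/2} := by
      intro w hw
      have him := hw.2
      rw [Set.uIcc_of_le hπ.le] at him
      exact ⟨him.1, him.2⟩
    have := Complex.integral_boundary_rect_eq_zero_of_differentiableOn (h s)
      (Complex.mk (-T) 0) (Complex.mk T (Real.pi/2)) ((hdiff s).mono hsub)
    exact this
  -- pointwise bound used on vertical sides
  have hside : ∀ s u v : ℝ, 0 < s → 0 ≤ v → v ≤ Real.pi/2 →
      ‖h s (↑u + ↑v * Complex.I)‖ ≤
        (if u ≤ 0 then M else K * Real.exp (σ * u)) *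
          Real.exp ((μ+1)*u - min s ω * Real.exp u) := by
    intro s u v hs hv1 hv2
    rw [hnorm]
    have hcos : 0 ≤ Real.cos v := Real.cos_nonneg_of_mem_Icc ⟨by linarith [Real.pi_pos], hv2⟩
    have hsin : 0 ≤ Real.sin v :=
      Real.sin_nonneg_of_nonneg_of_le_pi hv1 (by linarith [Real.pi_pos])
    refine mul_le_mul (hfb u v hv1 hv2) ?_ (Real.exp_pos _).le (by split <;> positivity)
    apply Real.exp_le_exp.mpr
    have h1 : min s ω ≤ s * Real.cos v + ω * Real.sin v := by
      have h2 : min s ω ≤ s := min_le_left _ _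
      have h3 : min s ω ≤ ω := min_le_right _ _
      have h4 := hsc v hv1 hv2
      nlinarith [lt_min hs hω]
    nlinarith [Real.exp_pos u]
  -- vertical sides tend to zero
  have hsideR : ∀ s : ℝ, 0 < s → Tendsto
      (fun T : ℝ => ∫ y : ℝ in (0:ℝ)..(Real.pi/2), h s (↑T + ↑y * Complex.I)) atTop (𝓝 0) := by
    intro s hs
    have hm0 : 0 < min s ω := lt_min hs hω
    apply squeeze_zero_norm' (a := fun T : ℝ =>
      K * Real.exp ((σ+μ+1)*T - min s ω * Real.exp T) * Real.pi)
    · filter_upwards [eventually_gt_atTop (0:ℝ)] with T hT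
      have hbd : ∀ y ∈ Set.uIoc (0:ℝ) (Real.pi/2),
          ‖h s (↑T + ↑y * Complex.I)‖ ≤ K * Real.exp ((σ+μ+1)*T - min s ω * Real.exp T) := by
        intro y hy
        rw [Set.uIoc_of_le hπ.le] at hy
        have := hside s T y hs hy.1.le hy.2
        rw [if_neg (not_le.mpr hT)] at this
        calc ‖h s (↑T + ↑y * Complex.I)‖
            ≤ K * Real.exp (σ * T) * Real.exp ((μ+1)*T - min s ω * Real.exp T) := this
          _ = K * Real.exp ((σ+μ+1)*T - min s ω * Real.exp T) := by
              rw [show (σ+μ+1)*T - min s ω * Real.exp T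
                  = σ*T + ((μ+1)*T - min s ω * Real.exp T) by ring, Real.exp_add]; ring
      calc ‖∫ y : ℝ in (0:ℝ)..(Real.pi/2), h s (↑T + ↑y * Complex.I)‖
          ≤ K * Real.exp ((σ+μ+1)*T - min s ω * Real.exp T) * |Real.pi/2 - 0| :=
            intervalIntegral.norm_integral_le_of_norm_le_const hbd
        _ ≤ K * Real.exp ((σ+μ+1)*T - min s ω * Real.exp T) * Real.pi := by
            rw [sub_zero, abs_of_pos hπ]
            have := Real.pi_pos
            gcongr
            linarith
    · have h1 : Tendsto (fun T : ℝ => Real.exp ((σ+μ+1)*T - min s ω * Real.exp T))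
          atTop (𝓝 0) := Real.tendsto_exp_atBot.comp (tendsto_exponent_atBot hm0)
      have := (h1.const_mul K).mul_const Real.pi
      simpa using this
  have hsideL : ∀ s : ℝ, 0 < s → Tendsto
      (fun T : ℝ => ∫ y : ℝ in (0:ℝ)..(Real.pi/2), h s (↑(-T) + ↑y * Complex.I)) atTop (𝓝 0) := by
    intro s hs
    apply squeeze_zero_norm' (a := fun T : ℝ => M * Real.exp (-(μ+1)*T) * Real.pi)
    · filter_upwards [eventually_gt_atTop (0:ℝ)] with T hT
      have hbd : ∀ y ∈ Set.uIoc (0:ℝ) (Real.pi/2),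
          ‖h s (↑(-T) + ↑y * Complex.I)‖ ≤ M * Real.exp (-(μ+1)*T) := by
        intro y hy
        rw [Set.uIoc_of_le hπ.le] at hy
        have h0 := hside s (-T) y hs hy.1.le hy.2
        rw [if_pos (by linarith : -T ≤ 0)] at h0
        refine h0.trans ?_
        have h2 : Real.exp ((μ+1)*(-T) - min s ω * Real.exp (-T)) ≤ Real.exp (-(μ+1)*T) := by
          apply Real.exp_le_exp.mpr
          have h3 : 0 < min s ω := lt_min hs hω
          nlinarith [Real.exp_pos (-T)]
        exact mul_le_mul_of_nonneg_left h2 hM.le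
      calc ‖∫ y : ℝ in (0:ℝ)..(Real.pi/2), h s (↑(-T) + ↑y * Complex.I)‖
          ≤ M * Real.exp (-(μ+1)*T) * |Real.pi/2 - 0| :=
            intervalIntegral.norm_integral_le_of_norm_le_const hbd
        _ ≤ M * Real.exp (-(μ+1)*T) * Real.pi := by
            rw [sub_zero, abs_of_pos hπ]
            have := Real.pi_pos
            gcongr
            linarith
    · have h1 : Tendsto (fun T : ℝ => Real.exp (-(μ+1)*T)) atTop (𝓝 0) := by
        apply Real.tendsto_exp_atBot.comp
        exact Tendsto.const_mul_atTop_of_neg (by linarith) tendsto_id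
      have := (h1.const_mul M).mul_const Real.pi
      simpa using this
  -- the key identity: bottom integral equals top integral
  have hkey : ∀ s : ℝ, 0 < s →
      (∫ u : ℝ, h s (↑u + ↑(0:ℝ) * Complex.I))
        = ∫ u : ℝ, h s (↑u + ↑(Real.pi/2) * Complex.I) := by
    intro s hs
    have hBot : Tendsto (fun T : ℝ => ∫ x : ℝ in (-T)..T, h s (↑x + ↑(0:ℝ) * Complex.I))
        atTop (𝓝 (∫ u : ℝ, h s (↑u + ↑(0:ℝ) * Complex.I))) :=
      intervalIntegral_tendsto_integral (hbot_int s hs) tendsto_neg_atTop_atBot tendsto_id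
    have hTop : Tendsto (fun T : ℝ => ∫ x : ℝ in (-T)..T, h s (↑x + ↑(Real.pi/2) * Complex.I))
        atTop (𝓝 (∫ u : ℝ, h s (↑u + ↑(Real.pi/2) * Complex.I))) :=
      intervalIntegral_tendsto_integral (htop_int s) tendsto_neg_atTop_atBot tendsto_id
    have hdiffT : Tendsto (fun T : ℝ =>
        (∫ x : ℝ in (-T)..T, h s (↑x + ↑(0:ℝ) * Complex.I)) -
          ∫ x : ℝ in (-T)..T, h s (↑x + ↑(Real.pi/2) * Complex.I)) atTop
        (𝓝 ((∫ u : ℝ, h s (↑u + ↑(0:ℝ) * Complex.I)) -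
          ∫ u : ℝ, h s (↑u + ↑(Real.pi/2) * Complex.I))) := hBot.sub hTop
    have hzeroT : Tendsto (fun T : ℝ =>
        (∫ x : ℝ in (-T)..T, h s (↑x + ↑(0:ℝ) * Complex.I)) -
          ∫ x : ℝ in (-T)..T, h s (↑x + ↑(Real.pi/2) * Complex.I)) atTop (𝓝 0) := by
      have heq : ∀ T : ℝ,
          (∫ x : ℝ in (-T)..T, h s (↑x + ↑(0:ℝ) * Complex.I)) -
            ∫ x : ℝ in (-T)..T, h s (↑x + ↑(Real.pi/2) * Complex.I)
          = Complex.I • (∫ y : ℝ in (0:ℝ)..(Real.pi/2), h s (↑(-T) + ↑y * Complex.I)) -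
            Complex.I • (∫ y : ℝ in (0:ℝ)..(Real.pi/2), h s (↑T + ↑y * Complex.I)) := by
        intro T
        have := hrect s T
        linear_combination this
      rw [show (0:ℂ) = Complex.I • (0:ℂ) - Complex.I • (0:ℂ) by simp]
      exact Tendsto.congr (fun T => (heq T).symm)
        (((hsideL s hs).const_smul Complex.I).sub ((hsideR s hs).const_smul Complex.I))
    have heq0 := tendsto_nhds_unique hdiffT hzeroT
    exact sub_eq_zero.mp heq0
  -- bottom line pointwise identity
  have hbotfun : ∀ s u : ℝ,
      Real.exp u • (Complex.exp (-(s:ℂ) * ((Real.exp u : ℝ) : ℂ)) *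
        (f ((Real.exp u : ℝ) : ℂ) * ((Real.exp u ^ μ : ℝ) : ℂ) *
          Complex.exp (Complex.I * (ω:ℂ) * ((Real.exp u : ℝ) : ℂ))))
      = h s (↑u + ↑(0:ℝ) * Complex.I) := by
    intro s u
    rw [hh]
    simp only
    have he : (↑u + ↑(0:ℝ) * Complex.I : ℂ) = (u:ℂ) := by simp
    rw [he]
    have h1 : ((Real.exp u ^ μ : ℝ) : ℂ) = Complex.exp ((μ:ℂ) * ↑u) := by
      rw [show Real.exp u ^ μ = Real.exp (u * μ) by rw [Real.exp_mul], Complex.ofReal_exp]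
      push_cast
      ring_nf
    rw [h1, Complex.real_smul, Complex.ofReal_exp]
    rw [show ((μ:ℂ)+1) * ↑u + (Complex.I * ↑ω - ↑s) * Complex.exp ↑u
        = (μ:ℂ) * ↑u + (↑u + (Complex.I * ↑ω * Complex.exp ↑u + -(↑s) * Complex.exp ↑u)) by ring,
      Complex.exp_add, Complex.exp_add, Complex.exp_add]
    ring
  -- exp of i pi/2
  have hexpi : Complex.exp (↑(Real.pi/2) * Complex.I) = Complex.I := by
    rw [Complex.exp_mul_I, ← Complex.ofReal_cos, ← Complex.ofReal_sin,
      Real.cos_pi_div_two, Real.sin_pi_div_two]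
    simp
  -- top line pointwise identity
  have htopfun : ∀ s u : ℝ,
      h s (↑u + ↑(Real.pi/2) * Complex.I)
      = Complex.exp (Complex.I * ((μ:ℂ) + 1) * (Real.pi:ℂ) / 2) *
        ((Real.exp u • (f (Complex.I * ((Real.exp u : ℝ):ℂ)) * ((Real.exp u ^ μ : ℝ):ℂ) *
            ((Real.exp (-ω * Real.exp u) : ℝ):ℂ))) *
          Complex.exp (-(s:ℂ) * Complex.I * ((Real.exp u : ℝ):ℂ))) := by
    intro s u
    rw [hh]
    simp only
    have he : Complex.exp (↑u + ↑(Real.pi/2) * Complex.I)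
        = Complex.I * ((Real.exp u : ℝ) : ℂ) := by
      rw [Complex.exp_add, hexpi, Complex.ofReal_exp]; ring
    rw [he]
    have h1 : ((Real.exp u ^ μ : ℝ) : ℂ) = Complex.exp ((μ:ℂ) * ↑u) := by
      rw [show Real.exp u ^ μ = Real.exp (u * μ) by rw [Real.exp_mul], Complex.ofReal_exp]
      push_cast
      ring_nf
    have h2 : ((Real.exp (-ω * Real.exp u) : ℝ) : ℂ)
        = Complex.exp (-(ω:ℂ) * Complex.exp ↑u) := by
      rw [Complex.ofReal_exp, Complex.ofReal_mul, Complex.ofReal_neg, Complex.ofReal_exp]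
    rw [h1, h2, Complex.real_smul, Complex.ofReal_exp]
    rw [show ((μ:ℂ)+1) * (↑u + ↑(Real.pi/2) * Complex.I)
          + (Complex.I * ↑ω - ↑s) * (Complex.I * Complex.exp ↑u)
        = (Complex.I * ((μ:ℂ)+1) * (Real.pi:ℂ)/2) + ((μ:ℂ) * ↑u + (↑u
            + (-(↑ω) * Complex.exp ↑u + -(↑s) * Complex.I * Complex.exp ↑u))) by
          push_cast
          linear_combination (↑ω * Complex.exp (↑u : ℂ)) * Complex.I_mul_I,
      Complex.exp_add, Complex.exp_add, Complex.exp_add, Complex.exp_add]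
    ring
  -- the target integrand after substitution
  set G : ℝ → ℂ := fun u => Real.exp u • (f (Complex.I * ((Real.exp u : ℝ):ℂ)) *
      ((Real.exp u ^ μ : ℝ):ℂ) * ((Real.exp (-ω * Real.exp u) : ℝ):ℂ)) with hGdef
  have hCne : Complex.exp (Complex.I * ((μ:ℂ) + 1) * (Real.pi:ℂ) / 2) ≠ 0 :=
    Complex.exp_ne_zero _
  have hGint : Integrable G := by
    have h0 := (htop_int 0).const_mul
      (Complex.exp (Complex.I * ((μ:ℂ) + 1) * (Real.pi:ℂ) / 2))⁻¹
    refine h0.congr (Eventually.of_forall fun u => ?_)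
    beta_reduce
    rw [htopfun 0 u, hGdef]
    simp only
    rw [show (-(((0:ℝ)):ℂ) * Complex.I * ((Real.exp u : ℝ):ℂ)) = 0 by norm_num, Complex.exp_zero,
      mul_one,
      ← mul_assoc, inv_mul_cancel₀ hCne, one_mul]
  have hIoiTarget : IntegrableOn (fun x : ℝ =>
      f (Complex.I * (x:ℂ)) * ((x ^ μ : ℝ):ℂ) * ((Real.exp (-ω * x) : ℝ):ℂ)) (Set.Ioi 0) := by
    rw [integrableOn_substExp]
    exact hGint
  have hTargetEq : (∫ x in Set.Ioi (0:ℝ), f (Complex.I * (x:ℂ)) * ((x ^ μ : ℝ):ℂ) *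
      ((Real.exp (-ω * x) : ℝ):ℂ)) = ∫ u : ℝ, G u := integral_substExp _
  -- the Abel-regularised integral, rotated
  have hPhiEq : ∀ s : ℝ, 0 < s →
      (∫ x in Set.Ioi (0:ℝ), Complex.exp (-(s:ℂ) * (x:ℂ)) *
        (f (x:ℂ) * ((x ^ μ : ℝ):ℂ) * Complex.exp (Complex.I * (ω:ℂ) * (x:ℂ))))
      = Complex.exp (Complex.I * ((μ:ℂ) + 1) * (Real.pi:ℂ) / 2) *
        ∫ u : ℝ, G u * Complex.exp (-(s:ℂ) * Complex.I * ((Real.exp u : ℝ):ℂ)) := by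
    intro s hs
    rw [integral_substExp]
    calc (∫ u : ℝ, Real.exp u • ((fun x : ℝ => Complex.exp (-(s:ℂ) * (x:ℂ)) *
          (f (x:ℂ) * ((x ^ μ : ℝ):ℂ) * Complex.exp (Complex.I * (ω:ℂ) * (x:ℂ))))
            (Real.exp u)))
        = ∫ u : ℝ, h s (↑u + ↑(0:ℝ) * Complex.I) :=
          integral_congr_ae (Eventually.of_forall fun u => hbotfun s u)
      _ = ∫ u : ℝ, h s (↑u + ↑(Real.pi/2) * Complex.I) := hkey s hs
      _ = ∫ u : ℝ, Complex.exp (Complex.I * ((μ:ℂ) + 1) * (Real.pi:ℂ) / 2) *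
            (G u * Complex.exp (-(s:ℂ) * Complex.I * ((Real.exp u : ℝ):ℂ))) :=
          integral_congr_ae (Eventually.of_forall fun u => htopfun s u)
      _ = Complex.exp (Complex.I * ((μ:ℂ) + 1) * (Real.pi:ℂ) / 2) *
            ∫ u : ℝ, G u * Complex.exp (-(s:ℂ) * Complex.I * ((Real.exp u : ℝ):ℂ)) :=
          integral_const_mul _ _
  -- dominated convergence in s
  have hDCT : Tendsto (fun s : ℝ => ∫ u : ℝ, G u *
      Complex.exp (-(s:ℂ) * Complex.I * ((Real.exp u : ℝ):ℂ)))
      (nhdsWithin 0 (Set.Ioi 0)) (nhds (∫ u : ℝ, G u)) := by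
    have hone : ∀ s u : ℝ, ‖Complex.exp (-(s:ℂ) * Complex.I * ((Real.exp u:ℝ):ℂ))‖ = 1 := by
      intro s u
      rw [Complex.norm_exp]
      have : (-(s:ℂ) * Complex.I * ((Real.exp u:ℝ):ℂ)).re = 0 := by
        simp [Complex.mul_re, Complex.mul_im]
      rw [this, Real.exp_zero]
    refine tendsto_integral_filter_of_dominated_convergence (fun u => ‖G u‖) ?_ ?_ hGint.norm ?_
    · filter_upwards with s
      exact hGint.aestronglyMeasurable.mul
        ((Complex.continuous_exp.comp (by fun_prop)).aestronglyMeasurable)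
    · filter_upwards with s
      refine Eventually.of_forall fun u => ?_
      rw [norm_mul, hone s u, mul_one]
    · refine Eventually.of_forall fun u => ?_
      have hc : Continuous (fun s : ℝ => G u *
          Complex.exp (-(s:ℂ) * Complex.I * ((Real.exp u:ℝ):ℂ))) := by fun_prop
      have h3 := (hc.tendsto 0).mono_left
        (nhdsWithin_le_nhds (s := Set.Ioi (0:ℝ)))
      simpa using h3
  refine ⟨hIoiTarget, ?_, ?_⟩
  · intro s hs
    rw [integrableOn_substExp]
    exact (hbot_int s hs).congr (Eventually.of_forall fun u => (hbotfun s u).symm)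
  · have hT : Tendsto (fun s : ℝ => Complex.exp (Complex.I*((μ:ℂ)+1)*(Real.pi:ℂ)/2) *
        ∫ u : ℝ, G u * Complex.exp (-(s:ℂ) * Complex.I * ((Real.exp u : ℝ):ℂ)))
        (nhdsWithin 0 (Set.Ioi 0))
        (nhds (Complex.exp (Complex.I*((μ:ℂ)+1)*(Real.pi:ℂ)/2) * ∫ u : ℝ, G u)) :=
      hDCT.const_mul _
    rw [hTargetEq]
    refine Tendsto.congr' ?_ hT
    filter_upwards [self_mem_nhdsWithin] with s hs
    exact (hPhiEq s hs).symm

end
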